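/- If a PPT state ρ on a multipartite Hilbert space H is not extremal in the convex set of PPT states, then there exists a PPT state σ ≠ ρ with range(σ) ⊆ range(ρ) and range(σ^{T_k}) ⊆ range(ρ^{T_k}) for every relevant partial transposition T_k; conversely, existence of such σ implies ρ is not extremal (one can find x > 0 with (1+x)ρ − xσ still PPT). -/

import Mathlib

set_option maxHeartbeats 1000000
set_option synthInstance.maxHeartbeats 400000


open scoped ComplexOrder

variable {n : Type} [Fintype n] [DecidableEq n]

/-- Membership in `D_PPT`: a state (PSD, trace one) all of whose relevant partial
transpositions `T k` are PSD. -/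
def IsPPTState {M : ℕ} (T : Fin M → (Matrix n n ℂ →ₗ[ℂ] Matrix n n ℂ))
    (ρ : Matrix n n ℂ) : Prop :=
  ρ.PosSemidef ∧ ρ.trace = 1 ∧ ∀ k, (T k ρ).PosSemidef

/-- Extremality in the convex set `D_PPT`. -/
def IsExtremalPPT {M : ℕ} (T : Fin M → (Matrix n n ℂ →ₗ[ℂ] Matrix n n ℂ))
    (ρ : Matrix n n ℂ) : Prop :=
  ∀ ρ₁ ρ₂ : Matrix n n ℂ, IsPPTState T ρ₁ → IsPPTState T ρ₂ →
    ∀ p : ℝ, 0 < p → p < 1 → ρ = p • ρ₁ + (1 - p) • ρ₂ → ρ₁ = ρ₂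

namespace Stmt15Aux

open Matrix LinearMap

/-- The inner product on Euclidean space versus the matrix quadratic form. -/
lemma inner_toEuclideanLin (M : Matrix n n ℂ) (x y : EuclideanSpace ℂ n) :
    @inner ℂ _ _ x (Matrix.toEuclideanLin M y) =
      star (WithLp.equiv 2 (n → ℂ) x) ⬝ᵥ M *ᵥ (WithLp.equiv 2 (n → ℂ) y) := by
  simp [PiLp.inner_apply, Matrix.toEuclideanLin_apply, dotProduct, RCLike.inner_apply, mul_comm]

lemma toEuclideanLin_eq_zero_iff (M : Matrix n n ℂ) (x : EuclideanSpace ℂ n) :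
    Matrix.toEuclideanLin M x = 0 ↔ M *ᵥ (WithLp.equiv 2 (n → ℂ) x) = 0 := by
  rw [Matrix.toEuclideanLin_apply]
  constructor
  · intro h; simpa using congrArg (WithLp.equiv 2 (n → ℂ)) h
  · intro h; simpa using h

lemma smul_posSemidef {A : Matrix n n ℂ} (hA : A.PosSemidef) {c : ℝ} (hc : 0 ≤ c) :
    ((c : ℂ) • A).PosSemidef := by
  refine Matrix.PosSemidef.of_dotProduct_mulVec_nonneg ?_ (fun w => ?_)
  · have : ((c:ℂ) • A)ᴴ = star (c:ℂ) • Aᴴ := by rw [conjTranspose_smul]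
    rw [Matrix.IsHermitian, this, hA.1]
    simp [Complex.conj_ofReal]
  · rw [smul_mulVec, dotProduct_smul, smul_eq_mul]
    exact mul_nonneg (by exact_mod_cast hc) (hA.dotProduct_mulVec_nonneg w)

/-- For a symmetric operator on a finite dimensional space, the range is the orthogonal
complement of the kernel. -/
lemma range_eq_orthogonal_ker (T : EuclideanSpace ℂ n →ₗ[ℂ] EuclideanSpace ℂ n)
    (hT : T.IsSymmetric) : LinearMap.range T = (LinearMap.ker T)ᗮ := by
  apply Submodule.eq_of_le_of_finrank_eq
  · rintro _ ⟨u, rfl⟩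
    rw [Submodule.mem_orthogonal]
    intro v hv
    rw [← hT v u, LinearMap.mem_ker.mp hv, inner_zero_left]
  · have h1 := LinearMap.finrank_range_add_finrank_ker T
    have h2 := Submodule.finrank_add_finrank_orthogonal (K := LinearMap.ker T)
    have h3 : Module.finrank ℂ (EuclideanSpace ℂ n) = Fintype.card n := finrank_euclideanSpace
    omega

lemma mem_range_toEuclideanLin_iff (A : Matrix n n ℂ) (x : EuclideanSpace ℂ n) :
    x ∈ LinearMap.range (Matrix.toEuclideanLin A) ↔
      (WithLp.equiv 2 (n → ℂ) x) ∈ LinearMap.range (Matrix.toLin' A) := by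
  constructor
  · rintro ⟨y, rfl⟩
    exact ⟨WithLp.equiv 2 _ y, by simp [Matrix.toEuclideanLin_apply, Matrix.toLin'_apply]⟩
  · rintro ⟨v, hv⟩
    refine ⟨(WithLp.equiv 2 (n → ℂ)).symm v, ?_⟩
    apply (WithLp.equiv 2 (n → ℂ)).injective
    simpa [Matrix.toEuclideanLin_apply, Matrix.toLin'_apply] using hv

lemma range_toLin'_le_iff (A B : Matrix n n ℂ) :
    LinearMap.range (Matrix.toLin' A) ≤ LinearMap.range (Matrix.toLin' B) ↔
      LinearMap.range (Matrix.toEuclideanLin A) ≤ LinearMap.range (Matrix.toEuclideanLin B) := by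
  constructor
  · intro h x hx
    rw [mem_range_toEuclideanLin_iff] at hx ⊢
    exact h hx
  · intro h v hv
    have hx : ((WithLp.equiv 2 (n → ℂ)).symm v) ∈ LinearMap.range (Matrix.toEuclideanLin A) := by
      rw [mem_range_toEuclideanLin_iff]; simpa using hv
    have := h hx
    rw [mem_range_toEuclideanLin_iff] at this
    simpa using this

/-- For Hermitian matrices, range inclusion (of `toLin'`) is equivalent to the reverse kernel
inclusion (of `toEuclideanLin`). -/
lemma range_le_iff_ker_le {A B : Matrix n n ℂ} (hA : A.IsHermitian) (hB : B.IsHermitian) :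
    LinearMap.range (Matrix.toLin' A) ≤ LinearMap.range (Matrix.toLin' B) ↔
      LinearMap.ker (Matrix.toEuclideanLin B) ≤ LinearMap.ker (Matrix.toEuclideanLin A) := by
  rw [range_toLin'_le_iff,
    range_eq_orthogonal_ker _ (Matrix.isHermitian_iff_isSymmetric.mp hA),
    range_eq_orthogonal_ker _ (Matrix.isHermitian_iff_isSymmetric.mp hB)]
  constructor
  · intro h
    have := Submodule.orthogonal_le h
    simpa [Submodule.orthogonal_orthogonal] using this
  · exact Submodule.orthogonal_le

/-- If `B - A ⪰ 0` with `A ⪰ 0`, then `ker B ≤ ker A`. -/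
lemma ker_le_of_sub_psd {A B : Matrix n n ℂ} (hA : A.PosSemidef) (hBA : (B - A).PosSemidef) :
    LinearMap.ker (Matrix.toEuclideanLin B) ≤ LinearMap.ker (Matrix.toEuclideanLin A) := by
  intro v hv
  rw [LinearMap.mem_ker, toEuclideanLin_eq_zero_iff] at hv ⊢
  set w := WithLp.equiv 2 (n → ℂ) v with hw
  have h1 : (0:ℂ) ≤ star w ⬝ᵥ A *ᵥ w := hA.dotProduct_mulVec_nonneg w
  have h2 := hBA.dotProduct_mulVec_nonneg w
  rw [sub_mulVec, dotProduct_sub, hv, dotProduct_zero, zero_sub] at h2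
  have : star w ⬝ᵥ A *ᵥ w = 0 := le_antisymm (by simpa using neg_nonneg.mp h2) h1
  exact (hA.dotProduct_mulVec_zero_iff w).mp this

/-- Key analytic step: if `A, B ⪰ 0` and `ker B ≤ ker A`, there is `x > 0` with
`B - x A ⪰ 0`. -/
lemma exists_pos_sub_smul_posSemidef {A B : Matrix n n ℂ} (hA : A.PosSemidef)
    (hB : B.PosSemidef)
    (hker : LinearMap.ker (Matrix.toEuclideanLin B) ≤ LinearMap.ker (Matrix.toEuclideanLin A)) :
    ∃ x : ℝ, 0 < x ∧ (B - (x : ℂ) • A).PosSemidef := by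
  classical
  set TA := Matrix.toEuclideanLin A with hTA
  set TB := Matrix.toEuclideanLin B with hTB
  have hTAsym : TA.IsSymmetric := Matrix.isHermitian_iff_isSymmetric.mp hA.1
  have hTBsym : TB.IsSymmetric := Matrix.isHermitian_iff_isSymmetric.mp hB.1
  -- main estimate
  have main : ∃ x : ℝ, 0 < x ∧ ∀ v : EuclideanSpace ℂ n,
      x * (@inner ℂ _ _ v (TA v)).re ≤ (@inner ℂ _ _ v (TB v)).re := by
    by_cases hbot : LinearMap.ker TB = ⊤
    · refine ⟨1, one_pos, fun v => ?_⟩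
      have hAv : TA v = 0 := by
        have : v ∈ LinearMap.ker TA := hker (by simp [hbot])
        simpa using this
      have hBv : TB v = 0 := by
        have : v ∈ LinearMap.ker TB := by simp [hbot]
        simpa using this
      simp [hAv, hBv]
    · -- the unit sphere of `(ker TB)ᗮ` is nonempty and compact
      set K : Submodule ℂ (EuclideanSpace ℂ n) := (LinearMap.ker TB)ᗮ with hK
      have hKne : K ≠ ⊥ := fun h => hbot (Submodule.orthogonal_eq_bot_iff.mp h)
      haveI : Nontrivial K := Submodule.nontrivial_iff_ne_bot.mpr hKne
      have hsne : (Metric.sphere (0 : K) 1).Nonempty :=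
        NormedSpace.sphere_nonempty.mpr zero_le_one
      have hcont : Continuous fun v : K => (@inner ℂ _ _ (v : EuclideanSpace ℂ n)
          (TB (v : EuclideanSpace ℂ n))).re := by
        have h1 : Continuous fun v : K => (v : EuclideanSpace ℂ n) := continuous_subtype_val
        have h2 : Continuous fun v : K => TB (v : EuclideanSpace ℂ n) :=
          TB.continuous_of_finiteDimensional.comp h1
        exact Complex.continuous_re.comp (h1.inner h2)
      obtain ⟨v₀, hv₀mem, hmin'⟩ := (isCompact_sphere (0 : K) 1).exists_isMinOn hsne
        hcont.continuousOn
      have hmin : ∀ u ∈ Metric.sphere (0 : K) 1,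
          (@inner ℂ _ _ (v₀ : EuclideanSpace ℂ n) (TB (v₀ : EuclideanSpace ℂ n))).re ≤
          (@inner ℂ _ _ (u : EuclideanSpace ℂ n) (TB (u : EuclideanSpace ℂ n))).re :=
        fun u hu => hmin' hu
      set c : ℝ := (@inner ℂ _ _ (v₀ : EuclideanSpace ℂ n) (TB (v₀ : EuclideanSpace ℂ n))).re
        with hc
      have hv₀norm : ‖(v₀ : EuclideanSpace ℂ n)‖ = 1 := by
        have := mem_sphere_zero_iff_norm.mp hv₀mem
        simpa using this
      -- quadratic forms are nonneg
      have quadB : ∀ v : EuclideanSpace ℂ n, (0:ℂ) ≤ @inner ℂ _ _ v (TB v) := fun v => by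
        rw [hTB, inner_toEuclideanLin]; exact hB.dotProduct_mulVec_nonneg _
      have quadA : ∀ v : EuclideanSpace ℂ n, (0:ℂ) ≤ @inner ℂ _ _ v (TA v) := fun v => by
        rw [hTA, inner_toEuclideanLin]; exact hA.dotProduct_mulVec_nonneg _
      have hcpos : 0 < c := by
        rcases (quadB (v₀ : EuclideanSpace ℂ n)).lt_or_eq with h | h
        · exact (Complex.pos_iff.mp h).1
        · exfalso
          have hz : @inner ℂ _ _ (v₀ : EuclideanSpace ℂ n) (TB (v₀ : EuclideanSpace ℂ n)) = 0 :=
            h.symm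
          have hTBv₀ : TB (v₀ : EuclideanSpace ℂ n) = 0 := by
            rw [hTB, toEuclideanLin_eq_zero_iff]
            apply (hB.dotProduct_mulVec_zero_iff _).mp
            rw [hTB, inner_toEuclideanLin] at hz
            exact hz
          have hker₀ : (v₀ : EuclideanSpace ℂ n) ∈ LinearMap.ker TB := by simpa using hTBv₀
          have : (v₀ : EuclideanSpace ℂ n) = 0 := by
            have horth := (Submodule.mem_orthogonal _ _).mp v₀.2
            have := horth _ hker₀
            exact inner_self_eq_zero.mp this
          rw [this] at hv₀norm; simp at hv₀norm
      -- operator norm bound for A's quadratic form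
      set CA : ℝ := ‖(LinearMap.toContinuousLinearMap TA : EuclideanSpace ℂ n →L[ℂ]
        EuclideanSpace ℂ n)‖ with hCA
      have hCA0 : 0 ≤ CA := norm_nonneg _
      have boundA : ∀ v : EuclideanSpace ℂ n, (@inner ℂ _ _ v (TA v)).re ≤ CA * ‖v‖ ^ 2 := by
        intro v
        calc (@inner ℂ _ _ v (TA v)).re ≤ ‖@inner ℂ _ _ v (TA v)‖ := Complex.re_le_norm _
          _ ≤ ‖v‖ * ‖TA v‖ := norm_inner_le_norm _ _
          _ ≤ ‖v‖ * (CA * ‖v‖) := by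
              apply mul_le_mul_of_nonneg_left _ (norm_nonneg v)
              simpa using (LinearMap.toContinuousLinearMap TA).le_opNorm v
          _ = CA * ‖v‖ ^ 2 := by ring
      -- lower bound for B's quadratic form on K
      have boundB : ∀ v : EuclideanSpace ℂ n, v ∈ K →
          c * ‖v‖ ^ 2 ≤ (@inner ℂ _ _ v (TB v)).re := by
        intro v hvK
        rcases eq_or_ne v 0 with rfl | hv0
        · simp
        · have hnv : 0 < ‖v‖ := norm_pos_iff.mpr hv0
          set u : K := ⟨((‖v‖⁻¹ : ℝ) : ℂ) • v, K.smul_mem _ hvK⟩ with hu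
          have hunorm : ‖(u : EuclideanSpace ℂ n)‖ = 1 := by
            rw [hu]
            simp [norm_smul, abs_of_pos (inv_pos.mpr hnv), inv_mul_cancel₀ hnv.ne']
          have humem : u ∈ Metric.sphere (0 : K) 1 := by
            rw [mem_sphere_zero_iff_norm]
            simpa using hunorm
          have hle := hmin u humem
          have hval : (@inner ℂ _ _ (u : EuclideanSpace ℂ n) (TB (u : EuclideanSpace ℂ n))).re
              = ‖v‖⁻¹ ^ 2 * (@inner ℂ _ _ v (TB v)).re := by
            rw [hu]
            simp only [Submodule.coe_mk]
            rw [LinearMap.map_smul, inner_smul_left, inner_smul_right, Complex.conj_ofReal,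
              ← mul_assoc, ← Complex.ofReal_mul, Complex.re_ofReal_mul, pow_two]
          rw [hval] at hle
          have hinv : ‖v‖⁻¹ ^ 2 * ‖v‖ ^ 2 = 1 := by
            field_simp
          calc c * ‖v‖ ^ 2 ≤ (‖v‖⁻¹ ^ 2 * (@inner ℂ _ _ v (TB v)).re) * ‖v‖ ^ 2 :=
                mul_le_mul_of_nonneg_right hle (sq_nonneg _)
            _ = (@inner ℂ _ _ v (TB v)).re * (‖v‖⁻¹ ^ 2 * ‖v‖ ^ 2) := by ring
            _ = (@inner ℂ _ _ v (TB v)).re := by rw [hinv, mul_one]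
      refine ⟨c / (CA + 1), div_pos hcpos (by linarith), fun v => ?_⟩
      -- decompose v
      obtain ⟨y, hy, z, hz, rfl⟩ := (LinearMap.ker TB).exists_add_mem_mem_orthogonal v
      have hTBy : TB y = 0 := LinearMap.mem_ker.mp hy
      have hTAy : TA y = 0 := LinearMap.mem_ker.mp (hker hy)
      have hquadB : @inner ℂ _ _ (y + z) (TB (y + z)) = @inner ℂ _ _ z (TB z) := by
        rw [map_add, hTBy, zero_add, inner_add_left, ← hTBsym y z, hTBy, inner_zero_left,
          zero_add]
      have hquadA : @inner ℂ _ _ (y + z) (TA (y + z)) = @inner ℂ _ _ z (TA z) := by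
        rw [map_add, hTAy, zero_add, inner_add_left, ← hTAsym y z, hTAy, inner_zero_left,
          zero_add]
      rw [hquadA, hquadB]
      have h1 : c / (CA + 1) * (@inner ℂ _ _ z (TA z)).re ≤ c / (CA + 1) * (CA * ‖z‖ ^ 2) :=
        mul_le_mul_of_nonneg_left (boundA z) (le_of_lt (div_pos hcpos (by linarith)))
      have h2 : c / (CA + 1) * (CA * ‖z‖ ^ 2) ≤ c * ‖z‖ ^ 2 := by
        have hfac : c / (CA + 1) * CA ≤ c := by
          rw [div_mul_eq_mul_div, div_le_iff₀ (by linarith : (0:ℝ) < CA + 1)]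
          nlinarith
        calc c / (CA + 1) * (CA * ‖z‖ ^ 2) = (c / (CA + 1) * CA) * ‖z‖ ^ 2 := by ring
          _ ≤ c * ‖z‖ ^ 2 := mul_le_mul_of_nonneg_right hfac (sq_nonneg _)
      exact le_trans (le_trans h1 h2) (boundB z hz)
  -- package the estimate into positive semidefiniteness
  obtain ⟨x, hx, hest⟩ := main
  refine ⟨x, hx, Matrix.PosSemidef.of_dotProduct_mulVec_nonneg ?_ (fun w => ?_)⟩
  · exact hB.1.sub (smul_posSemidef hA hx.le).1
  · have expand : star w ⬝ᵥ (B - (x:ℂ) • A) *ᵥ w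
        = star w ⬝ᵥ B *ᵥ w - (x:ℂ) * (star w ⬝ᵥ A *ᵥ w) := by
      rw [sub_mulVec, dotProduct_sub, smul_mulVec, dotProduct_smul, smul_eq_mul]
    set v : EuclideanSpace ℂ n := (WithLp.equiv 2 (n → ℂ)).symm w with hv
    have hAv : @inner ℂ _ _ v (TA v) = star w ⬝ᵥ A *ᵥ w := by
      rw [hTA, inner_toEuclideanLin]; simp [hv]
    have hBv : @inner ℂ _ _ v (TB v) = star w ⬝ᵥ B *ᵥ w := by
      rw [hTB, inner_toEuclideanLin]; simp [hv]
    have ha := hA.dotProduct_mulVec_nonneg w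
    have hb := hB.dotProduct_mulVec_nonneg w
    have haim : (star w ⬝ᵥ A *ᵥ w).im = 0 := ((Complex.nonneg_iff.mp ha).2).symm
    have hbim : (star w ⬝ᵥ B *ᵥ w).im = 0 := ((Complex.nonneg_iff.mp hb).2).symm
    have hre := hest v
    rw [hAv, hBv] at hre
    rw [expand, Complex.nonneg_iff]
    constructor
    · simp only [Complex.sub_re, Complex.mul_re, Complex.ofReal_re, Complex.ofReal_im, haim]
      simpa using sub_nonneg.mpr hre
    · simp [Complex.sub_im, Complex.mul_im, haim, hbim]

/-- Monotonicity: shrinking the coefficient preserves positive semidefiniteness. -/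
lemma sub_smul_psd_mono {A B : Matrix n n ℂ} (hA : A.PosSemidef) {x y : ℝ}
    (hy : 0 ≤ y) (hxy : y ≤ x) (h : (B - (x:ℂ) • A).PosSemidef) :
    (B - (y:ℂ) • A).PosSemidef := by
  have key : B - (y:ℂ) • A = (B - (x:ℂ) • A) + ((x - y : ℝ) : ℂ) • A := by
    push_cast
    rw [sub_smul]
    abel
  rw [key]
  exact h.add (smul_posSemidef hA (by linarith))

lemma real_smul_matrix (r : ℝ) (X : Matrix n n ℂ) : r • X = (r : ℂ) • X := by
  ext i j; simp [Complex.real_smul]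

/-- If `ρ₀ = p σ₀ + (1-p) τ₀` is a convex combination of PSD matrices, then
`ker ρ₀ ≤ ker σ₀`. -/
lemma ker_le_of_convex_combo {ρ₀ σ₀ τ₀ : Matrix n n ℂ} (hσ : σ₀.PosSemidef)
    (hτ : τ₀.PosSemidef) {p : ℝ} (hp0 : 0 < p) (hp1 : p < 1)
    (hcombo : ρ₀ = (p : ℂ) • σ₀ + ((1 - p : ℝ) : ℂ) • τ₀) :
    LinearMap.ker (Matrix.toEuclideanLin ρ₀) ≤ LinearMap.ker (Matrix.toEuclideanLin σ₀) := by
  have h1 : (ρ₀ - (p:ℂ) • σ₀).PosSemidef := by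
    rw [hcombo, add_sub_cancel_left]
    exact smul_posSemidef hτ (by linarith)
  have h2 := ker_le_of_sub_psd (smul_posSemidef hσ hp0.le) h1
  intro v hv
  have h3 := h2 hv
  rw [LinearMap.mem_ker, toEuclideanLin_eq_zero_iff] at h3 ⊢
  rw [smul_mulVec] at h3
  have hp : (p : ℂ) ≠ 0 := by exact_mod_cast hp0.ne'
  exact (smul_eq_zero.mp h3).resolve_left hp

/-- Range facts for a component of a convex decomposition of a PPT state. -/
lemma range_facts {M : ℕ} (T : Fin M → (Matrix n n ℂ →ₗ[ℂ] Matrix n n ℂ))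
    {ρ σ τ : Matrix n n ℂ} (hρ : IsPPTState T ρ) (hσ : IsPPTState T σ) (hτ : IsPPTState T τ)
    {p : ℝ} (hp0 : 0 < p) (hp1 : p < 1) (hcombo : ρ = p • σ + (1 - p) • τ) :
    LinearMap.range (Matrix.toLin' σ) ≤ LinearMap.range (Matrix.toLin' ρ) ∧
    ∀ k, LinearMap.range (Matrix.toLin' (T k σ)) ≤ LinearMap.range (Matrix.toLin' (T k ρ)) := by
  have hcomboC : ρ = (p : ℂ) • σ + ((1 - p : ℝ) : ℂ) • τ := by
    rw [hcombo, real_smul_matrix, real_smul_matrix]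
  constructor
  · exact (range_le_iff_ker_le hσ.1.1 hρ.1.1).mpr
      (ker_le_of_convex_combo hσ.1 hτ.1 hp0 hp1 hcomboC)
  · intro k
    have hTk : T k ρ = (p : ℂ) • T k σ + ((1 - p : ℝ) : ℂ) • T k τ := by
      rw [hcomboC, map_add, LinearMap.map_smul, LinearMap.map_smul]
    exact (range_le_iff_ker_le (hσ.2.2 k).1 (hρ.2.2 k).1).mpr
      (ker_le_of_convex_combo (hσ.2.2 k) (hτ.2.2 k) hp0 hp1 hTk)

end Stmt15Aux

open Stmt15Aux Matrix

/-- a PPT state `ρ` is not extremal in `D_PPT` iff there exists a PPT state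
`σ ≠ ρ` with `range σ ⊆ range ρ` and `range σ^{T_k} ⊆ range ρ^{T_k}` for every `k`. -/
theorem stmt15 (M : ℕ) (T : Fin M → (Matrix n n ℂ →ₗ[ℂ] Matrix n n ℂ))
    (hTpsd : ∀ k (X : Matrix n n ℂ), X.PosSemidef → (T k X).PosSemidef)
    (hTinv : ∀ k, Function.Involutive (T k))
    (ρ : Matrix n n ℂ) (hρ : IsPPTState T ρ) :
    ¬ IsExtremalPPT T ρ ↔
      ∃ σ : Matrix n n ℂ, IsPPTState T σ ∧ σ ≠ ρ ∧
        LinearMap.range (Matrix.toLin' σ) ≤ LinearMap.range (Matrix.toLin' ρ) ∧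
        ∀ k, LinearMap.range (Matrix.toLin' (T k σ))
          ≤ LinearMap.range (Matrix.toLin' (T k ρ)) := by
  constructor
  · -- not extremal → such a σ exists
    intro hne
    unfold IsExtremalPPT at hne
    push_neg at hne
    obtain ⟨ρ₁, ρ₂, h₁, h₂, p, hp0, hp1, hcombo, hne12⟩ := hne
    by_cases h1ρ : ρ₁ = ρ
    · -- then use ρ₂, which differs from ρ
      have hcombo' : ρ = (1 - p) • ρ₂ + (1 - (1 - p)) • ρ₁ := by
        rw [add_comm] at hcombo
        simpa using hcombo
      have hfacts := range_facts T hρ h₂ h₁ (by linarith : (0:ℝ) < 1 - p)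
        (by linarith : (1:ℝ) - p < 1) hcombo'
      exact ⟨ρ₂, h₂, fun h => hne12 (h1ρ.trans h.symm), hfacts.1, hfacts.2⟩
    · have hfacts := range_facts T hρ h₁ h₂ hp0 hp1 hcombo
      exact ⟨ρ₁, h₁, h1ρ, hfacts.1, hfacts.2⟩
  · -- such a σ exists → not extremal
    rintro ⟨σ, hσPPT, hσne, hrange, hrangek⟩ hext
    have hker0 : LinearMap.ker (Matrix.toEuclideanLin ρ) ≤
        LinearMap.ker (Matrix.toEuclideanLin σ) :=
      (range_le_iff_ker_le hσPPT.1.1 hρ.1.1).mp hrange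
    obtain ⟨x₀, hx₀, hpsd0⟩ := exists_pos_sub_smul_posSemidef hσPPT.1 hρ.1 hker0
    have hkerk : ∀ k, LinearMap.ker (Matrix.toEuclideanLin (T k ρ)) ≤
        LinearMap.ker (Matrix.toEuclideanLin (T k σ)) := fun k =>
      (range_le_iff_ker_le (hσPPT.2.2 k).1 (hρ.2.2 k).1).mp (hrangek k)
    choose xs hxs hpsds using fun k =>
      exists_pos_sub_smul_posSemidef (hσPPT.2.2 k) (hρ.2.2 k) (hkerk k)
    classical
    set s : Finset ℝ := insert x₀ (Finset.univ.image xs) with hs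
    have hsne : s.Nonempty := ⟨x₀, Finset.mem_insert_self _ _⟩
    set m : ℝ := s.min' hsne with hm
    have hm0 : 0 < m := by
      rcases Finset.mem_insert.mp (s.min'_mem hsne) with h | h
      · rw [hm, h]; exact hx₀
      · obtain ⟨k, _, hk⟩ := Finset.mem_image.mp h
        rw [hm, ← hk]; exact hxs k
    set p : ℝ := min m (1/2) with hp
    have hp0 : 0 < p := lt_min hm0 (by norm_num)
    have hp1 : p < 1 := lt_of_le_of_lt (min_le_right _ _) (by norm_num)
    have hpx0 : p ≤ x₀ :=
      le_trans (min_le_left _ _) (s.min'_le x₀ (Finset.mem_insert_self _ _))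
    have hpxs : ∀ k, p ≤ xs k := fun k =>
      le_trans (min_le_left _ _)
        (s.min'_le (xs k) (Finset.mem_insert_of_mem (Finset.mem_image_of_mem xs
          (Finset.mem_univ k))))
    have hd0 : (ρ - (p:ℂ) • σ).PosSemidef := sub_smul_psd_mono hσPPT.1 hp0.le hpx0 hpsd0
    have hdk : ∀ k, (T k ρ - (p:ℂ) • T k σ).PosSemidef := fun k =>
      sub_smul_psd_mono (hσPPT.2.2 k) hp0.le (hpxs k) (hpsds k)
    have h1p : (0:ℝ) < 1 - p := by linarith
    set τ : Matrix n n ℂ := (((1 - p)⁻¹ : ℝ) : ℂ) • (ρ - (p:ℂ) • σ) with hτdef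
    have hτPPT : IsPPTState T τ := by
      refine ⟨smul_posSemidef hd0 (inv_nonneg.mpr h1p.le), ?_, fun k => ?_⟩
      · rw [hτdef, Matrix.trace_smul, Matrix.trace_sub, Matrix.trace_smul, hρ.2.1, hσPPT.2.1]
        simp only [smul_eq_mul]
        rw [show ((1:ℂ) - (p:ℂ) * 1) = ((1 - p : ℝ) : ℂ) by push_cast; ring]
        rw [← Complex.ofReal_mul, inv_mul_cancel₀ h1p.ne']
        simp
      · have : T k τ = (((1 - p)⁻¹ : ℝ) : ℂ) • (T k ρ - (p:ℂ) • T k σ) := by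
          rw [hτdef, LinearMap.map_smul, map_sub, LinearMap.map_smul]
        rw [this]
        exact smul_posSemidef (hdk k) (inv_nonneg.mpr h1p.le)
    have hcombo : ρ = p • σ + (1 - p) • τ := by
      rw [real_smul_matrix, real_smul_matrix, hτdef, smul_smul, ← Complex.ofReal_mul,
        mul_inv_cancel₀ h1p.ne']
      simp
    have heq : σ = τ := hext σ τ hσPPT hτPPT p hp0 hp1 hcombo
    apply hσne
    rw [← heq] at hcombo
    rw [← add_smul] at hcombo
    have hps : p + (1 - p) = 1 := by ring
    rw [hps] at hcombo
    simpa using hcombo.symm
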